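/- Every integer solution x of q(x) = 1, where q is the quadratic form of the tree Aₙ, satisfies |x₁| ≤ 1 and |xₙ| ≤ 1. -/

import Mathlib

/-- The quadratic form of the Coxeter tree `Aₙ`. -/
def qA (n : ℕ) (x : ℕ → ℤ) : ℤ :=
  (∑ i ∈ Finset.range n, (x i)^2) - ∑ i ∈ Finset.range (n-1), x i * x (i+1)

lemma two_qA (x : ℕ → ℤ) : ∀ n, 1 ≤ n →
    2 * qA n x = (x 0)^2 + (x (n-1))^2 + ∑ i ∈ Finset.range (n-1), (x i - x (i+1))^2 := by
  intro n
  induction n with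
  | zero => omega
  | succ m ih =>
    intro _
    rcases Nat.eq_or_lt_of_le (Nat.one_le_iff_ne_zero.mpr (Nat.succ_ne_zero m)) with h | h
    · obtain rfl : m = 0 := by omega
      simp [qA]
      ring
    · have hm : 1 ≤ m := by omega
      have key : qA (m+1) x = qA m x + (x m)^2 - x (m-1) * x m := by
        unfold qA
        rw [Finset.sum_range_succ (fun i => (x i)^2) m]
        have : m + 1 - 1 = (m-1) + 1 := by omega
        rw [this, Finset.sum_range_succ (fun i => x i * x (i+1)) (m-1)]
        have : m - 1 + 1 = m := by omega
        rw [this]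
        ring
      have ihm := ih hm
      have hsum : ∑ i ∈ Finset.range (m+1-1), (x i - x (i+1))^2
          = (∑ i ∈ Finset.range (m-1), (x i - x (i+1))^2) + (x (m-1) - x m)^2 := by
        have h1 : m + 1 - 1 = (m-1) + 1 := by omega
        rw [h1, Finset.sum_range_succ]
        have : m - 1 + 1 = m := by omega
        rw [this]
      rw [key, hsum]
      have : m + 1 - 1 = m := by omega
      rw [this]
      have h2 : m - 1 + 1 = m := by omega
      nlinarith [ihm]

theorem qA_eq_one_ends_le_one (n : ℕ) (hn : 1 ≤ n) (x : ℕ → ℤ)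
    (hx : qA n x = 1) : |x 0| ≤ 1 ∧ |x (n-1)| ≤ 1 := by
  have h := two_qA x n hn
  rw [hx] at h
  have hs : 0 ≤ ∑ i ∈ Finset.range (n-1), (x i - x (i+1))^2 :=
    Finset.sum_nonneg fun i _ => sq_nonneg _
  constructor
  · by_contra hc
    push_neg at hc
    have : 2 ≤ |x 0| := hc
    nlinarith [sq_abs (x 0), sq_nonneg (x (n-1))]
  · by_contra hc
    push_neg at hc
    have : 2 ≤ |x (n-1)| := hc
    nlinarith [sq_abs (x (n-1)), sq_nonneg (x 0)]
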